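/- Let (N, I) be a k-system on a finite ground set N, where k is a positive integer. Let u_1, ..., u_s be distinct elements of N such that T = {u_1, ..., u_s} ∈ I. Let O ⊆ N \ T be a set with O ∈ I such that T ∪ {v} ∉ I for every v ∈ O. Then there exists a map Υ : O → T such that: (1) for every v ∈ O, if Υ(v) = u_t then {u_1, ..., u_{t−1}} ∪ {v} ∈ I; and (2) for every u ∈ T, the fiber Υ^{−1}(u) = {v ∈ O : Υ(v) = u} has at most k elements. -/

import Mathlib

section Aux
variable {α : Type*} [DecidableEq α] (I : Finset α → Prop)

/-- card of a prefix filter on `Fin s`. -/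
lemma aux_card_prefix (s c : ℕ) (hc : c ≤ s) :
    (Finset.univ.filter fun i : Fin s => (i : ℕ) < c).card = c := by
  have h : (Finset.univ.filter fun i : Fin s => (i : ℕ) < c)
      = Finset.image (Fin.castLE hc) Finset.univ := by
    ext i
    simp only [Finset.mem_filter, Finset.mem_univ, true_and, Finset.mem_image]
    constructor
    · intro hi; exact ⟨⟨i, hi⟩, rfl⟩
    · rintro ⟨j, rfl⟩; exact j.2
  rw [h, Finset.card_image_of_injective _ (Fin.castLE_injective hc),
    Finset.card_univ, Fintype.card_fin]

/-- extend an independent set to a base. -/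
lemma aux_exists_base
    (h_down : ∀ X Y : Finset α, X ⊆ Y → I Y → I X)
    (Y X : Finset α) (hXY : X ⊆ Y) (hX : I X) :
    ∃ B : Finset α, X ⊆ B ∧ B ⊆ Y ∧ I B ∧ ∀ w ∈ Y \ B, ¬ I (insert w B) := by
  classical
  obtain ⟨B, hBmem, hBmax⟩ := Finset.exists_max_image
    (Y.powerset.filter fun B => X ⊆ B ∧ I B) Finset.card
    ⟨X, by simp [hXY, hX]⟩
  simp only [Finset.mem_filter, Finset.mem_powerset] at hBmem
  refine ⟨B, hBmem.2.1, hBmem.1, hBmem.2.2, ?_⟩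
  intro w hw hI
  simp only [Finset.mem_sdiff] at hw
  have hmem : insert w B ∈ (Y.powerset.filter fun B => X ⊆ B ∧ I B) := by
    simp only [Finset.mem_filter, Finset.mem_powerset]
    exact ⟨Finset.insert_subset hw.1 hBmem.1,
      hBmem.2.1.trans (Finset.subset_insert _ _), hI⟩
  have := hBmax _ hmem
  rw [Finset.card_insert_of_notMem hw.2] at this
  omega

end Aux

theorem stmt_0 {α : Type*} [DecidableEq α] [Fintype α]
    (I : Finset α → Prop) (k : ℕ) (hk : 0 < k)
    (h_empty : I ∅)
    (h_down : ∀ X Y : Finset α, X ⊆ Y → I Y → I X)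
    (h_ksys : ∀ Y X₁ X₂ : Finset α, X₁ ⊆ Y → X₂ ⊆ Y → I X₁ → I X₂ →
      (∀ u ∈ Y \ X₁, ¬ I (insert u X₁)) →
      (∀ u ∈ Y \ X₂, ¬ I (insert u X₂)) →
      X₁.card ≤ k * X₂.card)
    (s : ℕ) (u : Fin s → α) (hu : Function.Injective u)
    (T : Finset α) (hT : T = Finset.image u Finset.univ) (hTI : I T)
    (O : Finset α) (hOT : Disjoint O T) (hOI : I O)
    (hOadd : ∀ v ∈ O, ¬ I (insert v T)) :
    ∃ Υ : {v : α // v ∈ O} → Fin s,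
      (∀ v : {v : α // v ∈ O},
        I (insert v.1 ((Finset.univ.filter (fun i : Fin s => i < Υ v)).image u))) ∧
      (∀ t : Fin s, (O.attach.filter (fun v => Υ v = t)).card ≤ k) := by
  classical
  -- prefix sets
  set P : ℕ → Finset α := fun c => (Finset.univ.filter fun i : Fin s => (i : ℕ) < c).image u
    with hP
  have hPmono : ∀ ⦃c d⦄, c ≤ d → P c ⊆ P d := by
    intro c d hcd
    apply Finset.image_subset_image
    intro i hi
    simp only [Finset.mem_filter, Finset.mem_univ, true_and] at hi ⊢
    omega
  have hPT : ∀ c, P c ⊆ T := by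
    intro c; rw [hT]; exact Finset.image_subset_image (Finset.filter_subset _ _)
  have hPs : T ⊆ P s := by
    rw [hT]; exact Finset.image_subset_image (by intro i _; simp [i.2])
  have hPI : ∀ c, I (P c) := fun c => h_down _ _ (hPT c) hTI
  have hPcard : ∀ c, c ≤ s → (P c).card = c := by
    intro c hc
    rw [hP, Finset.card_image_of_injective _ hu, aux_card_prefix s c hc]
  -- the case s = 0
  rcases Nat.eq_zero_or_pos s with hs0 | hs
  · subst hs0
    have hTe : T = ∅ := by
      rw [hT]
      simp [Finset.univ_eq_empty]
    have hO : O = ∅ := by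
      by_contra h
      obtain ⟨v, hv⟩ := Finset.nonempty_iff_ne_empty.mpr h
      refine hOadd v hv (h_down _ _ ?_ hOI)
      rw [hTe]
      simpa using hv
    subst hO
    refine ⟨fun v => absurd v.2 (Finset.notMem_empty v.1), fun v => ?_, fun t => ?_⟩
    · exact absurd v.2 (Finset.notMem_empty v.1)
    · simp
  -- define the "threshold" t v
  have hexists : ∀ v : α, ∃ m, ¬ I (insert v (P (m + 1))) ∨ s ≤ m + 1 :=
    fun v => ⟨s - 1, Or.inr (by omega)⟩
  obtain ⟨t, htspec⟩ : ∃ t : α → ℕ, ∀ v,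
      (¬ I (insert v (P (t v + 1))) ∨ s ≤ t v + 1) ∧ t v ≤ s - 1 ∧
      ∀ m, m < t v → I (insert v (P (m + 1))) := by
    refine ⟨fun v => Nat.find (hexists v), fun v => ⟨Nat.find_spec (hexists v), ?_, ?_⟩⟩
    · exact Nat.find_le (Or.inr (by omega))
    · intro m hm
      have := Nat.find_min (hexists v) hm
      push_neg at this
      exact this.1
  have ht_le : ∀ v, t v ≤ s - 1 := fun v => (htspec v).2.1
  have ht_lt : ∀ v, t v < s := fun v => lt_of_le_of_lt (ht_le v) (by omega)
  have ht_not : ∀ v ∈ O, ¬ I (insert v (P (t v + 1))) := by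
    intro v hv
    rcases (htspec v).1 with h | h
    · exact h
    · have heq : t v + 1 = s := by have := ht_le v; omega
      rw [heq]
      intro hI
      exact hOadd v hv (h_down _ _ (Finset.insert_subset_insert _ hPs) hI)
  have ht_ind : ∀ v ∈ O, I (insert v (P (t v))) := by
    intro v hv
    rcases Nat.eq_zero_or_pos (t v) with h0 | hpos
    · rw [h0]
      have hP0 : P 0 = ∅ := by simp [hP]
      rw [hP0]
      have hsub : ({v} : Finset α) ⊆ O := Finset.singleton_subset_iff.mpr hv
      simpa using h_down _ _ hsub hOI
    · have := (htspec v).2.2 (t v - 1) (by omega)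
      have h1 : t v - 1 + 1 = t v := by omega
      rwa [h1] at this
  -- cumulative bound
  have hcum : ∀ m, m < s → (O.filter fun v => t v ≤ m).card ≤ k * (m + 1) := by
    intro m hm
    set F := O.filter fun v => t v ≤ m with hF
    have hFI : I F := h_down _ _ (Finset.filter_subset _ _) hOI
    set Y := P (m + 1) ∪ F with hY
    obtain ⟨B, hFB, hBY, hBI, hBbase⟩ := aux_exists_base I h_down Y F
      (Finset.subset_union_right) hFI
    have hX2base : ∀ w ∈ Y \ P (m + 1), ¬ I (insert w (P (m + 1))) := by
      intro w hw
      simp only [Finset.mem_sdiff, hY, Finset.mem_union] at hw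
      have hwF : w ∈ F := hw.1.resolve_left hw.2
      simp only [hF, Finset.mem_filter] at hwF
      intro hI
      exact ht_not w hwF.1 (h_down _ _ (Finset.insert_subset_insert _
        (hPmono (by omega))) hI)
    have := h_ksys Y B (P (m + 1)) hBY Finset.subset_union_left hBI (hPI _)
      hBbase hX2base
    rw [hPcard (m + 1) (by omega)] at this
    calc F.card ≤ B.card := Finset.card_le_card hFB
    _ ≤ k * (m + 1) := this
  -- key / rank
  have hC : ∀ v : α, (Fintype.equivFin α v : ℕ) < Fintype.card α := fun v =>
    (Fintype.equivFin α v).2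
  set C := Fintype.card α with hCdef
  set key : α → ℕ := fun v => t v * C + (Fintype.equivFin α v : ℕ) with hkey
  have hkey_inj : Function.Injective key := by
    intro v w h
    simp only [hkey] at h
    have hv := hC v
    have hw := hC w
    have htvw : t v = t w := by nlinarith
    rw [htvw] at h
    have : (Fintype.equivFin α v : ℕ) = (Fintype.equivFin α w : ℕ) := by omega
    exact (Fintype.equivFin α).injective (Fin.ext this)
  have hkey_t : ∀ v w : α, key w < key v → t w ≤ t v := by
    intro v w h
    by_contra hc
    push_neg at hc
    have hv := hC v
    have : (t v + 1) * C ≤ t w * C := Nat.mul_le_mul_right _ (by omega)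
    simp only [hkey] at h
    nlinarith
  set rank : α → ℕ := fun v => (O.filter fun w => key w < key v).card with hrank
  have hrank_lt : ∀ v ∈ O, rank v < k * (t v + 1) := by
    intro v hv
    have hsub : (O.filter fun w => key w < key v) ⊆
        (O.filter fun w => t w ≤ t v).erase v := by
      intro w hw
      simp only [Finset.mem_filter] at hw
      refine Finset.mem_erase.mpr ⟨?_, Finset.mem_filter.mpr ⟨hw.1, hkey_t v w hw.2⟩⟩
      rintro rfl; omega
    have hvmem : v ∈ (O.filter fun w => t w ≤ t v) :=
      Finset.mem_filter.mpr ⟨hv, le_refl _⟩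
    have h1 : rank v ≤ (O.filter fun w => t w ≤ t v).card - 1 := by
      have := Finset.card_le_card hsub
      rw [Finset.card_erase_of_mem hvmem] at this
      exact this
    have h2 := hcum (t v) (ht_lt v)
    have h3 : 0 < (O.filter fun w => t w ≤ t v).card := Finset.card_pos.mpr ⟨v, hvmem⟩
    omega
  have hrank_mono : ∀ v ∈ O, ∀ w ∈ O, key v < key w → rank v < rank w := by
    intro v hv w hw h
    have hsub : insert v (O.filter fun x => key x < key v) ⊆
        O.filter fun x => key x < key w := by
      apply Finset.insert_subset (Finset.mem_filter.mpr ⟨hv, h⟩)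
      intro x hx
      simp only [Finset.mem_filter] at hx ⊢
      exact ⟨hx.1, hx.2.trans h⟩
    have := Finset.card_le_card hsub
    rw [Finset.card_insert_of_notMem (by simp)] at this
    simp only [hrank]; omega
  have hrank_inj : ∀ v ∈ O, ∀ w ∈ O, rank v = rank w → v = w := by
    intro v hv w hw h
    by_contra hne
    have : key v ≠ key w := fun hkeq => hne (hkey_inj hkeq)
    rcases lt_or_gt_of_ne this with hlt | hgt
    · exact absurd h (Nat.ne_of_lt (hrank_mono v hv w hw hlt))
    · exact absurd h.symm (Nat.ne_of_lt (hrank_mono w hw v hv hgt))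
  -- define Υ
  have hdiv : ∀ v ∈ O, rank v / k ≤ t v := by
    intro v hv
    have := hrank_lt v hv
    have : rank v / k < t v + 1 := Nat.div_lt_iff_lt_mul hk |>.mpr (by
      calc rank v < k * (t v + 1) := this
      _ = (t v + 1) * k := Nat.mul_comm _ _)
    omega
  set Υ0 : {v : α // v ∈ O} → Fin s :=
    fun v => ⟨rank v.1 / k, lt_of_le_of_lt (hdiv v.1 v.2) (ht_lt v.1)⟩ with hΥ
  refine ⟨Υ0, ?_, ?_⟩
  · intro v
    have heq : (Finset.univ.filter fun i : Fin s => i < Υ0 v)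
        = (Finset.univ.filter fun i : Fin s => (i : ℕ) < rank v.1 / k) := by
      ext i
      simp [hΥ, Fin.lt_def]
    rw [heq]
    exact h_down _ _ (Finset.insert_subset_insert _ (hPmono (hdiv v.1 v.2)))
      (ht_ind v.1 v.2)
  · intro τ
    have hbound : (O.attach.filter fun v => Υ0 v = τ).card ≤
        (Finset.Ico ((τ : ℕ) * k) ((τ : ℕ) * k + k)).card := by
      apply Finset.card_le_card_of_injOn (fun v => rank v.1)
      · intro v hv
        simp only [Finset.mem_coe, Finset.mem_filter] at hv ⊢
        have hvk : rank v.1 / k = (τ : ℕ) := congrArg Fin.val hv.2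
        rw [Finset.mem_Ico]
        constructor
        · calc (τ : ℕ) * k = rank v.1 / k * k := by rw [hvk]
          _ ≤ rank v.1 := Nat.div_mul_le_self _ _
        · have h5 : rank v.1 < (rank v.1 / k + 1) * k :=
            (Nat.div_lt_iff_lt_mul hk).mp (Nat.lt_succ_self _)
          rw [hvk] at h5
          calc rank v.1 < ((τ : ℕ) + 1) * k := h5
          _ = (τ : ℕ) * k + k := by ring
      · intro v hv w hw h
        exact Subtype.ext (hrank_inj v.1 v.2 w.1 w.2 h)
    rw [Nat.card_Ico] at hbound
    simpa using hbound
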